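/- arXiv:2410.24222 — 3 statements merged into one kernel-verified Lean document; each statement's English description precedes it below -/
import Mathlib

section
/- Let K be an n×n symmetric positive definite matrix, D = diag(K)^{−1/2} (the diagonal matrix with entries K_{ii}^{−1/2}), and K̂ = D K D. Then the smallest eigenvalue of K̂ satisfies λ_min(K̂) ≥ λ_min(K) / λ_max(K). -/
open Matrix Finset

variable {m : ℕ}

lemma quad_eq_sum (A : Matrix (Fin (m+1)) (Fin (m+1)) ℝ) (hA : A.IsHermitian)
    (x : Fin (m+1) → ℝ) :
    x ⬝ᵥ A *ᵥ x = ∑ j, hA.eigenvalues j *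
      ((star (hA.eigenvectorUnitary : Matrix (Fin (m+1)) (Fin (m+1)) ℝ) *ᵥ x) j)^2 := by
  set U : Matrix (Fin (m+1)) (Fin (m+1)) ℝ := (hA.eigenvectorUnitary : Matrix (Fin (m+1)) (Fin (m+1)) ℝ) with hU
  have hy : star U *ᵥ x = vecMul x U := by
    ext j
    simp [mulVec, vecMul, dotProduct, Matrix.star_apply, mul_comm]
  conv_lhs => rw [hA.spectral_theorem, Unitary.conjStarAlgAut_apply]
  rw [← mulVec_mulVec, ← mulVec_mulVec, dotProduct_mulVec, ← hy]
  simp only [dotProduct, mulVec_diagonal, Function.comp_apply, RCLike.ofReal_real_eq_id, id_eq]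
  exact Finset.sum_congr rfl fun j _ => by ring

lemma norm_eq (A : Matrix (Fin (m+1)) (Fin (m+1)) ℝ) (hA : A.IsHermitian)
    (x : Fin (m+1) → ℝ) :
    (star (hA.eigenvectorUnitary : Matrix (Fin (m+1)) (Fin (m+1)) ℝ) *ᵥ x) ⬝ᵥ
    (star (hA.eigenvectorUnitary : Matrix (Fin (m+1)) (Fin (m+1)) ℝ) *ᵥ x) = x ⬝ᵥ x := by
  set U : Matrix (Fin (m+1)) (Fin (m+1)) ℝ := (hA.eigenvectorUnitary : Matrix (Fin (m+1)) (Fin (m+1)) ℝ) with hU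
  have hy : star U *ᵥ x = vecMul x U := by
    ext j
    simp [mulVec, vecMul, dotProduct, Matrix.star_apply, mul_comm]
  have hUU : U * star U = 1 := (mem_unitaryGroup_iff).mp hA.eigenvectorUnitary.2
  rw [dotProduct_mulVec, hy, vecMul_vecMul, hUU, vecMul_one]

lemma rayleigh_lower (A : Matrix (Fin (m+1)) (Fin (m+1)) ℝ) (hA : A.IsHermitian)
    (x : Fin (m+1) → ℝ) :
    (⨅ j, hA.eigenvalues j) * (x ⬝ᵥ x) ≤ x ⬝ᵥ A *ᵥ x := by
  rw [quad_eq_sum A hA x, ← norm_eq A hA x]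
  set y := star (hA.eigenvectorUnitary : Matrix (Fin (m+1)) (Fin (m+1)) ℝ) *ᵥ x
  have : y ⬝ᵥ y = ∑ j, (y j)^2 := by simp [dotProduct, sq]
  rw [this, Finset.mul_sum]
  apply Finset.sum_le_sum
  intro j _
  exact mul_le_mul_of_nonneg_right
    (ciInf_le (Set.Finite.bddBelow (Set.finite_range _)) j) (sq_nonneg _)

lemma rayleigh_upper (A : Matrix (Fin (m+1)) (Fin (m+1)) ℝ) (hA : A.IsHermitian)
    (x : Fin (m+1) → ℝ) :
    x ⬝ᵥ A *ᵥ x ≤ (⨆ j, hA.eigenvalues j) * (x ⬝ᵥ x) := by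
  rw [quad_eq_sum A hA x, ← norm_eq A hA x]
  set y := star (hA.eigenvectorUnitary : Matrix (Fin (m+1)) (Fin (m+1)) ℝ) *ᵥ x
  have : y ⬝ᵥ y = ∑ j, (y j)^2 := by simp [dotProduct, sq]
  rw [this, Finset.mul_sum]
  apply Finset.sum_le_sum
  intro j _
  exact mul_le_mul_of_nonneg_right
    (le_ciSup (Set.Finite.bddAbove (Set.finite_range _)) j) (sq_nonneg _)

theorem stmt_4 (n : ℕ) (K : Matrix (Fin (n + 1)) (Fin (n + 1)) ℝ) (hK : K.PosDef)
    (Khat : Matrix (Fin (n + 1)) (Fin (n + 1)) ℝ)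
    (hKhatdef : Khat =
      Matrix.diagonal (fun i => (Real.sqrt (K i i))⁻¹) * K *
        Matrix.diagonal (fun i => (Real.sqrt (K i i))⁻¹))
    (hKhat : Khat.IsHermitian) :
    ∀ i, (⨅ j, hK.1.eigenvalues j) / (⨆ j, hK.1.eigenvalues j) ≤ hKhat.eigenvalues i := by
  intro i
  set lmin := ⨅ j, hK.1.eigenvalues j with hlmin
  set lmax := ⨆ j, hK.1.eigenvalues j with hlmax
  -- positivity facts
  have hev : ∀ j, 0 < hK.1.eigenvalues j := hK.eigenvalues_pos
  have hlmin_pos : 0 < lmin := by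
    obtain ⟨j0, hj0⟩ := Finite.exists_min fun j => hK.1.eigenvalues j
    exact lt_of_lt_of_le (hev j0) (le_ciInf hj0)
  have hlmax_pos : 0 < lmax :=
    lt_of_lt_of_le hlmin_pos ((ciInf_le (Set.Finite.bddBelow (Set.finite_range _)) i).trans
      (le_ciSup (Set.Finite.bddAbove (Set.finite_range _)) i))
  -- diagonal entries positive and bounded by lmax
  have hdiag_pos : ∀ j, 0 < K j j := fun j => by
    have := hK.dotProduct_mulVec_pos (x := Pi.single j 1) (by simp [Pi.single_eq_same, Function.ne_iff])
    simpa [dotProduct, mulVec, Pi.single_apply] using this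
  have hdiag_le : ∀ j, K j j ≤ lmax := fun j => by
    have h := rayleigh_upper K hK.1 (Pi.single j 1)
    have h1 : (Pi.single j 1 : Fin (n+1) → ℝ) ⬝ᵥ K *ᵥ Pi.single j 1 = K j j := by
      simp [dotProduct, mulVec, Pi.single_apply]
    have h2 : (Pi.single j 1 : Fin (n+1) → ℝ) ⬝ᵥ Pi.single j 1 = 1 := by
      simp [dotProduct, Pi.single_apply]
    rw [h1, h2, mul_one] at h
    exact h
  -- the unit eigenvector of Khat
  set v : Fin (n+1) → ℝ := ⇑(hKhat.eigenvectorBasis i) with hv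
  have hval : hKhat.eigenvalues i = v ⬝ᵥ Khat *ᵥ v := by
    have := hKhat.eigenvalues_eq i
    simpa using this
  have hvnorm : v ⬝ᵥ v = 1 := by
    have h := hKhat.eigenvectorBasis.orthonormal.1 i
    have h2 : (inner ℝ (hKhat.eigenvectorBasis i) (hKhat.eigenvectorBasis i) : ℝ) = 1 := by
      rw [real_inner_self_eq_norm_sq, h]; norm_num
    rw [PiLp.inner_apply] at h2
    simpa [dotProduct, RCLike.inner_apply, hv, sq] using h2
  -- the transformed vector
  set w : Fin (n+1) → ℝ := fun j => (Real.sqrt (K j j))⁻¹ * v j with hw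
  have hDv : (Matrix.diagonal (fun j => (Real.sqrt (K j j))⁻¹)) *ᵥ v = w := by
    ext a; simp [mulVec_diagonal, hw]
  have hquad : v ⬝ᵥ Khat *ᵥ v = w ⬝ᵥ K *ᵥ w := by
    rw [hKhatdef, ← mulVec_mulVec, ← mulVec_mulVec, hDv, dotProduct_mulVec]
    congr 1
    ext a; simp [vecMul_diagonal, hw, mul_comm]
  -- lower bound on w ⬝ᵥ w
  have hwn : 1 / lmax ≤ w ⬝ᵥ w := by
    have : ∀ j ∈ Finset.univ, (v j)^2 / lmax ≤ w j * w j := by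
      intro j _
      have hsq : w j * w j = (v j)^2 / K j j := by
        rw [hw]
        have : (Real.sqrt (K j j))⁻¹ * v j * ((Real.sqrt (K j j))⁻¹ * v j)
            = (v j)^2 * ((Real.sqrt (K j j)) * (Real.sqrt (K j j)))⁻¹ := by
          rw [mul_inv]; ring
        rw [this, Real.mul_self_sqrt (hdiag_pos j).le, div_eq_mul_inv]
      rw [hsq]
      exact div_le_div_of_nonneg_left (sq_nonneg _) (hdiag_pos j) (hdiag_le j)
    have hsum := Finset.sum_le_sum this
    have hL : ∑ j, (v j)^2 / lmax = 1 / lmax := by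
      rw [← Finset.sum_div]
      congr 1
      simpa [dotProduct, sq] using hvnorm
    rw [hL] at hsum
    simpa [dotProduct] using hsum
  -- combine
  have hray := rayleigh_lower K hK.1 w
  rw [hval, hquad]
  calc lmin / lmax = lmin * (1 / lmax) := by rw [mul_one_div]
    _ ≤ lmin * (w ⬝ᵥ w) := by
        exact mul_le_mul_of_nonneg_left hwn hlmin_pos.le
    _ ≤ w ⬝ᵥ K *ᵥ w := hray
end

section
/- Let K be an n×n symmetric positive definite matrix, D = diag(K)^{−1/2}, and K̂ = D K D. Then the largest eigenvalue of K̂ satisfies λ_max(K̂) ≤ λ_max(K) / λ_min(K). -/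
open Matrix

private lemma rayleigh_le {m : Type*} [Fintype m] [DecidableEq m]
    {A : Matrix m m ℝ} (hA : A.IsHermitian) {c : ℝ}
    (hc : ∀ j, hA.eigenvalues j ≤ c) (x : m → ℝ) :
    x ⬝ᵥ (A *ᵥ x) ≤ c * (x ⬝ᵥ x) := by
  have hP : ((c • (1 : Matrix m m ℝ)) - A).PosSemidef := by
    have h1 : (c • (1 : Matrix m m ℝ)) - A =
        (hA.eigenvectorUnitary : Matrix m m ℝ) *
          (diagonal fun j => c - hA.eigenvalues j) *
          (star (hA.eigenvectorUnitary : Matrix m m ℝ)) := by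
      have hU : (hA.eigenvectorUnitary : Matrix m m ℝ) *
          (star (hA.eigenvectorUnitary : Matrix m m ℝ)) = 1 :=
        Matrix.mem_unitaryGroup_iff.mp hA.eigenvectorUnitary.2
      have hsp := hA.spectral_theorem
      rw [Unitary.conjStarAlgAut_apply] at hsp
      have hdiag : (diagonal fun j => c - hA.eigenvalues j) =
          c • (1 : Matrix m m ℝ) - diagonal (RCLike.ofReal ∘ hA.eigenvalues) := by
        ext j k
        by_cases h : j = k <;>
          simp [h, Matrix.sub_apply, Matrix.smul_apply, Matrix.one_apply,
            Matrix.diagonal_apply, Function.comp]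
      rw [hdiag, Matrix.mul_sub, Matrix.sub_mul, Matrix.mul_smul, Matrix.mul_one,
        Matrix.smul_mul, hU, ← hsp]
    rw [h1]
    exact (posSemidef_diagonal_iff.mpr fun j => sub_nonneg.mpr (hc j)).mul_mul_conjTranspose_same _
  have h2 := hP.dotProduct_mulVec_nonneg x
  simp only [star_trivial, Matrix.sub_mulVec, Matrix.smul_mulVec, Matrix.one_mulVec,
    dotProduct_sub, dotProduct_smul, smul_eq_mul] at h2
  linarith

private lemma rayleigh_ge {m : Type*} [Fintype m] [DecidableEq m]
    {A : Matrix m m ℝ} (hA : A.IsHermitian) {c : ℝ}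
    (hc : ∀ j, c ≤ hA.eigenvalues j) (x : m → ℝ) :
    c * (x ⬝ᵥ x) ≤ x ⬝ᵥ (A *ᵥ x) := by
  have hP : (A - c • (1 : Matrix m m ℝ)).PosSemidef := by
    have h1 : A - (c • (1 : Matrix m m ℝ)) =
        (hA.eigenvectorUnitary : Matrix m m ℝ) *
          (diagonal fun j => hA.eigenvalues j - c) *
          (star (hA.eigenvectorUnitary : Matrix m m ℝ)) := by
      have hU : (hA.eigenvectorUnitary : Matrix m m ℝ) *
          (star (hA.eigenvectorUnitary : Matrix m m ℝ)) = 1 :=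
        Matrix.mem_unitaryGroup_iff.mp hA.eigenvectorUnitary.2
      have hsp := hA.spectral_theorem
      rw [Unitary.conjStarAlgAut_apply] at hsp
      have hdiag : (diagonal fun j => hA.eigenvalues j - c) =
          diagonal (RCLike.ofReal ∘ hA.eigenvalues) - c • (1 : Matrix m m ℝ) := by
        ext j k
        by_cases h : j = k <;>
          simp [h, Matrix.sub_apply, Matrix.smul_apply, Matrix.one_apply,
            Matrix.diagonal_apply, Function.comp]
      rw [hdiag, Matrix.mul_sub, Matrix.sub_mul, Matrix.mul_smul, Matrix.mul_one,
        Matrix.smul_mul, hU, ← hsp]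
    rw [h1]
    exact (posSemidef_diagonal_iff.mpr fun j => sub_nonneg.mpr (hc j)).mul_mul_conjTranspose_same _
  have h2 := hP.dotProduct_mulVec_nonneg x
  simp only [star_trivial, Matrix.sub_mulVec, Matrix.smul_mulVec, Matrix.one_mulVec,
    dotProduct_sub, dotProduct_smul, smul_eq_mul] at h2
  linarith

theorem stmt_5 (n : ℕ) (K : Matrix (Fin (n + 1)) (Fin (n + 1)) ℝ) (hK : K.PosDef)
    (Khat : Matrix (Fin (n + 1)) (Fin (n + 1)) ℝ)
    (hKhatdef : Khat =
      Matrix.diagonal (fun i => (Real.sqrt (K i i))⁻¹) * K *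
        Matrix.diagonal (fun i => (Real.sqrt (K i i))⁻¹))
    (hKhat : Khat.IsHermitian) :
    ∀ i, hKhat.eigenvalues i ≤ (⨆ j, hK.1.eigenvalues j) / (⨅ j, hK.1.eigenvalues j) := by
  intro i
  set a : ℝ := ⨆ j, hK.1.eigenvalues j with ha
  set b : ℝ := ⨅ j, hK.1.eigenvalues j with hb
  have hle_a : ∀ j, hK.1.eigenvalues j ≤ a :=
    fun j => le_ciSup (Set.Finite.bddAbove (Set.finite_range _)) j
  have hge_b : ∀ j, b ≤ hK.1.eigenvalues j :=
    fun j => ciInf_le (Set.Finite.bddBelow (Set.finite_range _)) j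
  have hbpos : 0 < b := by
    have : ∀ j, 0 < hK.1.eigenvalues j := hK.eigenvalues_pos
    obtain ⟨j0, hj0⟩ := Finite.exists_min (fun j => hK.1.eigenvalues j)
    calc (0:ℝ) < hK.1.eigenvalues j0 := this j0
    _ ≤ b := le_ciInf hj0
  have hapos : 0 < a := lt_of_lt_of_le hbpos (le_trans (hge_b i) (hle_a i))
  -- diag entries of K are positive and ≥ b
  have hdiagpos : ∀ j, 0 < K j j := fun j => by
    have hne : (Pi.single j 1 : Fin (n + 1) → ℝ) ≠ 0 := by
      intro h
      simpa using congr_fun h j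
    have := hK.dotProduct_mulVec_pos hne
    simpa [dotProduct, mulVec, Pi.single_apply] using this
  have hdiag_ge : ∀ j, b ≤ K j j := by
    intro j
    have := rayleigh_ge hK.1 hge_b (Pi.single j 1)
    simpa using this
  -- eigenvector
  set v : Fin (n + 1) → ℝ := ⇑(hKhat.eigenvectorBasis i) with hv
  have hvnorm : v ⬝ᵥ v = 1 := by
    have h1 : ‖hKhat.eigenvectorBasis i‖ = 1 := hKhat.eigenvectorBasis.orthonormal.1 i
    have h2 : ∑ j, ‖(hKhat.eigenvectorBasis i) j‖ ^ 2 = 1 := by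
      rw [EuclideanSpace.norm_eq] at h1
      exact Real.sqrt_eq_one.mp h1
    simpa [dotProduct, Real.norm_eq_abs, sq_abs, pow_two] using h2
  have hmv : Khat *ᵥ v = hKhat.eigenvalues i • v := hKhat.mulVec_eigenvectorBasis i
  have heig : hKhat.eigenvalues i = v ⬝ᵥ (Khat *ᵥ v) := by
    rw [hmv, dotProduct_smul, smul_eq_mul, hvnorm, mul_one]
  -- w = D v
  set w : Fin (n + 1) → ℝ := fun j => (Real.sqrt (K j j))⁻¹ * v j with hw
  have hkey : v ⬝ᵥ (Khat *ᵥ v) = w ⬝ᵥ (K *ᵥ w) := by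
    have hDv : (Matrix.diagonal fun i => (Real.sqrt (K i i))⁻¹) *ᵥ v = w := by
      funext j
      simp [Matrix.mulVec_diagonal, hw]
    rw [hKhatdef, ← Matrix.mulVec_mulVec, ← Matrix.mulVec_mulVec, hDv,
      Matrix.dotProduct_mulVec]
    congr 1
    funext j
    simp [Matrix.vecMul_diagonal, hw, mul_comm]
  have hww : w ⬝ᵥ w ≤ 1 / b := by
    have h1 : ∀ j, w j * w j = v j * v j / K j j := by
      intro j
      have hs : (Real.sqrt (K j j))⁻¹ * (Real.sqrt (K j j))⁻¹ = (K j j)⁻¹ := by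
        rw [← mul_inv, Real.mul_self_sqrt (hdiagpos j).le]
      calc w j * w j
          = ((Real.sqrt (K j j))⁻¹ * (Real.sqrt (K j j))⁻¹) * (v j * v j) := by
            rw [hw]; ring
        _ = v j * v j / K j j := by rw [hs, div_eq_mul_inv]; ring
    have h2 : ∀ j, v j * v j / K j j ≤ v j * v j / b := by
      intro j
      apply div_le_div_of_nonneg_left (mul_self_nonneg _) hbpos (hdiag_ge j)
    calc w ⬝ᵥ w = ∑ j, v j * v j / K j j := by
          simp only [dotProduct]; exact Finset.sum_congr rfl fun j _ => h1 j
      _ ≤ ∑ j, v j * v j / b := Finset.sum_le_sum fun j _ => h2 j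
      _ = (v ⬝ᵥ v) / b := by rw [dotProduct, Finset.sum_div]
      _ = 1 / b := by rw [hvnorm]
  calc hKhat.eigenvalues i = w ⬝ᵥ (K *ᵥ w) := by rw [heig, hkey]
    _ ≤ a * (w ⬝ᵥ w) := rayleigh_le hK.1 hle_a w
    _ ≤ a * (1 / b) := mul_le_mul_of_nonneg_left hww hapos.le
    _ = a / b := by field_simp
end

section
/- With K(ρ) = K₀ + D_ρ positive definite and α = K(ρ)⁻¹y, the Hessian of the negative log marginal likelihood −2L(ρ) = yᵀK(ρ)⁻¹y + log det K(ρ) with respect to ρ is the matrix (2ααᵀ − K(ρ)⁻¹) ∘ K(ρ)⁻¹, where ∘ denotes the Hadamard product; i.e., ∂²(−2L)/∂ρᵢ∂ρⱼ = [2ααᵀ − K⁻¹]_{ij}[K⁻¹]_{ij}. -/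
open Matrix

attribute [local instance] Matrix.linftyOpNormedRing Matrix.linftyOpNormedAlgebra

/-- Entry-evaluation combined with `mulVec`, as a linear map in the matrix. -/
noncomputable def entryLM (n : ℕ) (a b : Fin n) :
    Matrix (Fin n) (Fin n) ℝ →ₗ[ℝ] ℝ where
  toFun M := M a b
  map_add' _ _ := rfl
  map_smul' _ _ := rfl

noncomputable def mulVecLM (n : ℕ) (y : Fin n → ℝ) (a : Fin n) :
    Matrix (Fin n) (Fin n) ℝ →ₗ[ℝ] ℝ where
  toFun M := M.mulVec y a
  map_add' A B := by simp [Matrix.add_mulVec]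
  map_smul' c A := by simp [Matrix.smul_mulVec]

theorem stmt_14 (n : ℕ) (K₀ : Matrix (Fin n) (Fin n) ℝ) (hK₀ : K₀.PosDef)
    (y ρ : Fin n → ℝ) (hρ : ∀ k, 0 ≤ ρ k) (i j : Fin n)
    (α : Fin n → ℝ) (hα : α = ((K₀ + Matrix.diagonal ρ)⁻¹).mulVec y) :
    HasDerivAt
      (fun t : ℝ =>
        ((K₀ + Matrix.diagonal (ρ + t • (Pi.single j 1 : Fin n → ℝ)))⁻¹
          - Matrix.vecMulVec
              (((K₀ + Matrix.diagonal (ρ + t • (Pi.single j 1 : Fin n → ℝ)))⁻¹).mulVec y)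
              (((K₀ + Matrix.diagonal (ρ + t • (Pi.single j 1 : Fin n → ℝ)))⁻¹).mulVec y)) i i)
      ((2 • Matrix.vecMulVec α α - (K₀ + Matrix.diagonal ρ)⁻¹) i j *
        (K₀ + Matrix.diagonal ρ)⁻¹ i j) 0 := by
  set K : Matrix (Fin n) (Fin n) ℝ := K₀ + Matrix.diagonal ρ with hK
  set E : Matrix (Fin n) (Fin n) ℝ := Matrix.diagonal (Pi.single j 1) with hE
  have hKpd : K.PosDef :=
    hK₀.add_posSemidef (Matrix.posSemidef_diagonal_iff.mpr hρ)
  have hU : IsUnit K := hKpd.isUnit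
  -- the affine path
  have haff : HasDerivAt (fun t : ℝ => K + t • E) E 0 := by
    have h0 := ((hasDerivAt_id (0:ℝ)).smul_const E).const_add K
    simp only [id_eq, one_smul] at h0; exact h0
  -- derivative of matrix inverse
  have hbase : K + (0:ℝ) • E = ↑hU.unit := by simp
  have hinv0 : HasDerivAt (fun t : ℝ => Ring.inverse (K + t • E))
      (-(K⁻¹ * E * K⁻¹)) 0 := by
    have h1 : HasFDerivAt Ring.inverse
        (-(ContinuousLinearMap.mulLeftRight ℝ (Matrix (Fin n) (Fin n) ℝ))
          ↑hU.unit⁻¹ ↑hU.unit⁻¹) (K + (0:ℝ) • E) :=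
      hbase ▸ hasFDerivAt_ringInverse (𝕜 := ℝ) hU.unit
    have h2 := h1.comp_hasDerivAt 0 haff
    have hcoe : ((hU.unit⁻¹ : (Matrix (Fin n) (Fin n) ℝ)ˣ) : Matrix (Fin n) (Fin n) ℝ)
        = K⁻¹ := by
      rw [← Ring.inverse_unit hU.unit, hU.unit_spec, Matrix.nonsing_inv_eq_ringInverse]
    simp [Function.comp_def, hcoe] at h2; exact h2
  have hinv : HasDerivAt (fun t : ℝ => (K + t • E)⁻¹) (-(K⁻¹ * E * K⁻¹)) 0 := by
    simpa only [Matrix.nonsing_inv_eq_ringInverse] using hinv0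
  -- entry derivatives via continuous linear maps
  have hentry : HasDerivAt (fun t : ℝ => (K + t • E)⁻¹ i i)
      ((-(K⁻¹ * E * K⁻¹)) i i) 0 :=
    ((entryLM n i i).toContinuousLinearMap.hasFDerivAt).comp_hasDerivAt 0 hinv
  have hv : ∀ a : Fin n, HasDerivAt (fun t : ℝ => ((K + t • E)⁻¹).mulVec y a)
      ((-(K⁻¹ * E * K⁻¹)).mulVec y a) 0 := fun a =>
    ((mulVecLM n y a).toContinuousLinearMap.hasFDerivAt).comp_hasDerivAt 0 hinv
  have hf : HasDerivAt
      (fun t : ℝ => (K + t • E)⁻¹ i i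
        - ((K + t • E)⁻¹).mulVec y i * ((K + t • E)⁻¹).mulVec y i)
      ((-(K⁻¹ * E * K⁻¹)) i i
        - ((-(K⁻¹ * E * K⁻¹)).mulVec y i * ((K + (0:ℝ) • E)⁻¹).mulVec y i
          + ((K + (0:ℝ) • E)⁻¹).mulVec y i * (-(K⁻¹ * E * K⁻¹)).mulVec y i)) 0 :=
    hentry.sub ((hv i).mul (hv i))
  -- identify the function
  have hfun : (fun t : ℝ =>
        ((K₀ + Matrix.diagonal (ρ + t • (Pi.single j 1 : Fin n → ℝ)))⁻¹
          - Matrix.vecMulVec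
              (((K₀ + Matrix.diagonal (ρ + t • (Pi.single j 1 : Fin n → ℝ)))⁻¹).mulVec y)
              (((K₀ + Matrix.diagonal (ρ + t • (Pi.single j 1 : Fin n → ℝ)))⁻¹).mulVec y)) i i)
      = (fun t : ℝ => (K + t • E)⁻¹ i i
        - ((K + t • E)⁻¹).mulVec y i * ((K + t • E)⁻¹).mulVec y i) := by
    funext t
    have : K₀ + Matrix.diagonal (ρ + t • (Pi.single j 1 : Fin n → ℝ)) = K + t • E := by
      ext a b
      by_cases h : a = b <;>
        simp [hK, hE, Matrix.diagonal_apply, Pi.single_apply, h, mul_ite, mul_zero, add_assoc]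
    rw [this, Matrix.sub_apply, Matrix.vecMulVec_apply]
  rw [hfun]
  -- identify the derivative value
  convert hf using 1
  have hsymm : K⁻¹ j i = K⁻¹ i j := by
    have h := hKpd.isHermitian.inv
    have := congrFun (congrFun h i) j
    simpa [Matrix.conjTranspose_apply] using this
  have hKEK : ∀ a b : Fin n, (K⁻¹ * E * K⁻¹) a b = K⁻¹ a j * K⁻¹ j b := by
    intro a b
    simp [hE, Matrix.mul_apply, Matrix.diagonal_apply, Pi.single_apply,
      Finset.mul_sum, Finset.sum_mul, Finset.sum_ite_eq, mul_comm, mul_assoc,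
      mul_left_comm]
  have hmv : (-(K⁻¹ * E * K⁻¹)).mulVec y i = -(K⁻¹ i j * α j) := by
    rw [hα]
    simp only [Matrix.neg_mulVec, Pi.neg_apply, neg_inj]
    simp only [Matrix.mulVec, dotProduct, hKEK]
    rw [Finset.mul_sum]
    congr 1; funext k; ring
  have hα0 : ((K + (0:ℝ) • E)⁻¹).mulVec y i = α i := by
    rw [hα]; simp [hK]
  rw [Matrix.neg_apply, hKEK, hmv, hα0, Matrix.sub_apply, Matrix.smul_apply,
    Matrix.vecMulVec_apply, hsymm]
  ring
end
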